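/- arXiv:2505.03665 — 3 statements merged into one kernel-verified Lean document; each statement's English description precedes it below -/
import Mathlib

section
/- Let n ≥ 4 and let G be a finite connected simple graph not isomorphic to K2. Then G contains an induced cycle on n vertices if and only if the reduction of G contains an induced cycle on n vertices. -/
open SimpleGraph

universe u

/-- The closed neighborhood of a vertex. -/
def closedNbhd {V : Type u} (G : SimpleGraph V) (v : V) : Set V :=
  insert v (G.neighborSet v)

/-- Two vertices are siblings if they share the same closed neighborhood. -/
def Sibling {V : Type u} (G : SimpleGraph V) (u v : V) : Prop :=
  closedNbhd G u = closedNbhd G v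

/-- A leaf is a vertex of degree one. -/
def IsLeaf {V : Type u} (G : SimpleGraph V) (v : V) : Prop :=
  Nat.card (G.neighborSet v) = 1

/-- The tuft number: the maximal number of leaves adjacent to a single vertex. -/
noncomputable def tuftNumber {V : Type u} (G : SimpleGraph V) : ℕ :=
  ⨆ v : V, Nat.card {u | IsLeaf G u ∧ G.Adj v u}

/-- The sibling number: the maximum over vertices `v` of the number of vertices sharing
the closed neighborhood of `v`, minus one. -/
noncomputable def siblingNumber {V : Type u} (G : SimpleGraph V) : ℕ :=
  ⨆ v : V, (Nat.card {u | Sibling G u v} - 1)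

/-- The complete graph on two vertices. -/
def K2 : SimpleGraph (Fin 2) := ⊤

/-- The sibling relation as a setoid. -/
def siblingSetoid {V : Type u} (G : SimpleGraph V) : Setoid V :=
  ⟨Sibling G, ⟨fun _ => rfl, fun {_ _} h => Eq.symm h, fun {_ _ _} h h' => Eq.trans h h'⟩⟩

/-- `rho G` is the quotient of `G` by the sibling relation: vertices are sibling
equivalence classes, two distinct classes being adjacent iff some pair of
representatives is adjacent. -/
def rho {V : Type u} (G : SimpleGraph V) : SimpleGraph (Quotient (siblingSetoid G)) where
  Adj A B := A ≠ B ∧ ∃ u v : V, Quotient.mk (siblingSetoid G) u = A ∧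
      Quotient.mk (siblingSetoid G) v = B ∧ G.Adj u v
  symm := by
    constructor
    rintro A B ⟨hne, u, v, hu, hv, h⟩
    exact ⟨hne.symm, v, u, hv, hu, h.symm⟩
  loopless := by
    constructor
    rintro A ⟨hne, -⟩
    exact hne rfl

/-- `lamS G S` is the induced subgraph on the complement of `S`. -/
def lamS {V : Type u} (G : SimpleGraph V) (S : Set V) : SimpleGraph ↥(Sᶜ) :=
  SimpleGraph.induce Sᶜ G

/-- `lam G` is the induced subgraph on the set of non-leaf vertices. -/
def lam {V : Type u} (G : SimpleGraph V) : SimpleGraph ↥{v : V | ¬ IsLeaf G v} :=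
  SimpleGraph.induce {v : V | ¬ IsLeaf G v} G

/-- A finite graph, bundled with its vertex type. -/
structure FinGraph : Type (u + 1) where
  V : Type u
  [finite : Finite V]
  G : SimpleGraph V

attribute [instance] FinGraph.finite

/-- One reduction step: remove all leaves, then contract each sibling class to a point. -/
def redStep (X : FinGraph.{u}) : FinGraph.{u} :=
  ⟨Quotient (siblingSetoid (lam X.G)), rho (lam X.G)⟩

/-- The reduction of a finite graph: iterate `redStep` until it stabilizes (up to
isomorphism this happens after at most `Nat.card X.V` steps). -/
noncomputable def reduction (X : FinGraph.{u}) : FinGraph.{u} :=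
  redStep^[Nat.card X.V] X

/-- `G` contains an induced cycle on `n` vertices. -/
def HasInducedCycle {V : Type u} (G : SimpleGraph V) (n : ℕ) : Prop :=
  ∃ s : Set V, Nonempty (SimpleGraph.induce s G ≃g cycleGraph n)

/-- A graph is chordal if it has no induced cycle on four or more vertices. -/
def Chordal {V : Type u} (G : SimpleGraph V) : Prop :=
  ∀ m : ℕ, 4 ≤ m → ¬ HasInducedCycle G m

/-- The setoid identifying isomorphic graphs on `Fin n` satisfying a property `P`. -/
def graphSetoid (n : ℕ) (P : SimpleGraph (Fin n) → Prop) :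
    Setoid {G : SimpleGraph (Fin n) // P G} :=
  ⟨fun G H => Nonempty (G.1 ≃g H.1),
    ⟨fun _ => ⟨Iso.refl⟩, fun ⟨e⟩ => ⟨e.symm⟩, fun ⟨e⟩ ⟨f⟩ => ⟨e.trans f⟩⟩⟩

/-- The number of isomorphism classes of graphs on `n` vertices satisfying `P`. -/
noncomputable def numClasses (n : ℕ) (P : SimpleGraph (Fin n) → Prop) : ℕ :=
  Nat.card (Quotient (graphSetoid n P))


/-! ### Auxiliary lemmas -/

section CycAux

open Fin.NatCast Fin.CommRing in
lemma natCast_ne_zero_fin {m : ℕ} {k : ℕ} (hk0 : k ≠ 0) (hk : k < m + 4) :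
    ((k : ℕ) : Fin (m + 4)) ≠ 0 := by
  intro h
  have := congrArg Fin.val h
  rw [Fin.val_natCast, Nat.mod_eq_of_lt hk] at this
  simp at this
  omega

lemma cyc_adj_iff {m : ℕ} {a b : Fin (m + 4)} :
    (cycleGraph (m + 4)).Adj a b ↔ b = a - 1 ∨ b = a + 1 := by
  have h := @cycleGraph_neighborSet (m + 2) a
  constructor
  · intro hadj
    have hb : b ∈ (cycleGraph (m + 4)).neighborSet a := hadj
    rw [h] at hb
    simpa using hb
  · intro hb
    have : b ∈ (cycleGraph (m + 4)).neighborSet a := by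
      rw [h]; simpa using hb
    exact this

open Fin.NatCast Fin.CommRing in
lemma cyc_two_ne {m : ℕ} (a : Fin (m + 4)) : a + 1 ≠ a - 1 := by
  intro h
  have h2 : ((2 : ℕ) : Fin (m + 4)) = 0 := by
    push_cast
    calc (2 : Fin (m + 4)) = (a + 1) - (a - 1) := by ring
    _ = 0 := sub_eq_zero.mpr h
  exact natCast_ne_zero_fin (by norm_num) (by omega) h2

open Fin.NatCast Fin.CommRing in
lemma cyc_no_chord {m : ℕ} (a : Fin (m + 4)) :
    ¬ (cycleGraph (m + 4)).Adj (a + 1) (a - 1) := by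
  intro h
  rcases cyc_adj_iff.mp h with h1 | h1
  · have h2 : ((1 : ℕ) : Fin (m + 4)) = 0 := by
      push_cast
      calc (1 : Fin (m + 4)) = a - (a - 1) := by ring
      _ = a - ((a + 1) - 1) := by rw [← h1]
      _ = 0 := by ring
    exact natCast_ne_zero_fin (by norm_num) (by omega) h2
  · have h3 : ((3 : ℕ) : Fin (m + 4)) = 0 := by
      push_cast
      calc (3 : Fin (m + 4)) = (a + 1 + 1) - (a - 1) := by ring
      _ = 0 := sub_eq_zero.mpr h1.symm
    exact natCast_ne_zero_fin (by norm_num) (by omega) h3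

/-- In `Cₙ` (n ≥ 4), two distinct neighbors of a common vertex are non-adjacent. -/
lemma cyc_F2 {n : ℕ} (hn : 4 ≤ n) {a b c : Fin n} (hab : (cycleGraph n).Adj a b)
    (hac : (cycleGraph n).Adj a c) (hbc : b ≠ c) : ¬ (cycleGraph n).Adj b c := by
  obtain ⟨m, rfl⟩ : ∃ m, n = m + 4 := ⟨n - 4, by omega⟩
  rcases cyc_adj_iff.mp hab with rfl | rfl <;>
  rcases cyc_adj_iff.mp hac with rfl | rfl
  · exact absurd rfl hbc
  · intro h; exact cyc_no_chord a h.symm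
  · intro h; exact cyc_no_chord a h
  · exact absurd rfl hbc

/-- Every vertex of `Cₙ` (n ≥ 4) has two distinct neighbors. -/
lemma cyc_F1 {n : ℕ} (hn : 4 ≤ n) (a : Fin n) :
    ∃ b c : Fin n, b ≠ c ∧ (cycleGraph n).Adj a b ∧ (cycleGraph n).Adj a c := by
  obtain ⟨m, rfl⟩ : ∃ m, n = m + 4 := ⟨n - 4, by omega⟩
  exact ⟨a + 1, a - 1, cyc_two_ne a, cyc_adj_iff.mpr (Or.inr rfl),
    cyc_adj_iff.mpr (Or.inl rfl)⟩

end CycAux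

section GraphAux

variable {V : Type u} {W : Type u} {G : SimpleGraph V}

lemma mem_closedNbhd {u v : V} : v ∈ closedNbhd G u ↔ v = u ∨ G.Adj u v := by
  simp [closedNbhd]

lemma Sibling.adj_of_ne {u v : V} (h : Sibling G u v) (hne : u ≠ v) : G.Adj u v := by
  have hv : v ∈ closedNbhd G v := Set.mem_insert _ _
  rw [← h] at hv
  rcases mem_closedNbhd.mp hv with h1 | h1
  · exact absurd h1.symm hne
  · exact h1

/-- Transport an induced-subgraph iso along an injective map matching adjacency. -/
noncomputable def induceIsoOfInjOn {H : SimpleGraph W} (f : V → W) (s : Set V)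
    (hinj : Set.InjOn f s)
    (hadj : ∀ u : s, ∀ v : s, H.Adj (f u) (f v) ↔ G.Adj u v) :
    (SimpleGraph.induce s G) ≃g (SimpleGraph.induce (f '' s) H) where
  toEquiv := Equiv.Set.imageOfInjOn f s hinj
  map_rel_iff' := by
    intro a b
    simpa [Equiv.Set.imageOfInjOn, SimpleGraph.comap] using hadj a b

lemma hic_of_induce {T : Set V} {n : ℕ} (h : HasInducedCycle (SimpleGraph.induce T G) n) :
    HasInducedCycle G n := by
  obtain ⟨s, ⟨e⟩⟩ := h
  exact ⟨Subtype.val '' s,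
    ⟨((induceIsoOfInjOn Subtype.val s Subtype.val_injective.injOn
      (fun u v => Iff.rfl)).symm.trans e)⟩⟩

/-- Vertices on an induced `n`-cycle (`n ≥ 4`) are not leaves. -/
lemma not_isLeaf_of_cycle {n : ℕ} (hn : 4 ≤ n) {s : Set V}
    (e : SimpleGraph.induce s G ≃g cycleGraph n) (v : s) : ¬ IsLeaf G v := by
  intro hleaf
  obtain ⟨b, c, hbc, hab, hac⟩ := cyc_F1 hn (e v)
  have hB : G.Adj v (e.symm b) := by
    have := e.map_adj_iff (v := v) (w := e.symm b)
    rw [e.apply_symm_apply] at this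
    exact this.mp hab
  have hC : G.Adj v (e.symm c) := by
    have := e.map_adj_iff (v := v) (w := e.symm c)
    rw [e.apply_symm_apply] at this
    exact this.mp hac
  have hsub : Subsingleton ↥(G.neighborSet v) := (Nat.card_eq_one_iff_unique.mp hleaf).1
  have : (⟨(e.symm b : s), hB⟩ : ↥(G.neighborSet v)) = ⟨(e.symm c : s), hC⟩ :=
    Subsingleton.elim _ _
  have hvals : ((e.symm b : s) : V) = ((e.symm c : s) : V) :=
    congrArg (Subtype.val : ↥(G.neighborSet ↑v) → V) this
  exact hbc (by simpa using e.symm.injective (Subtype.ext hvals))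

/-- No two distinct vertices on an induced `n`-cycle (`n ≥ 4`) are siblings. -/
lemma not_sibling_of_cycle {n : ℕ} (hn : 4 ≤ n) {s : Set V}
    (e : SimpleGraph.induce s G ≃g cycleGraph n) (u v : s) (hne : (u : V) ≠ (v : V)) :
    ¬ Sibling G u v := by
  intro hsib
  have hadjG : G.Adj u v := hsib.adj_of_ne hne
  have hadjc : (cycleGraph n).Adj (e u) (e v) := e.map_adj_iff.mpr hadjG
  obtain ⟨b, c, hbc, hab, hac⟩ := cyc_F1 hn (e u)
  -- pick a neighbor `d` of `e u` distinct from `e v`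
  obtain ⟨d, hd_adj, hd_ne⟩ : ∃ d, (cycleGraph n).Adj (e u) d ∧ d ≠ e v := by
    by_cases hb : b = e v
    · exact ⟨c, hac, by rw [← hb]; exact fun h => hbc h.symm⟩
    · exact ⟨b, hab, hb⟩
  have hW : G.Adj u (e.symm d) := by
    have := e.map_adj_iff (v := u) (w := e.symm d)
    rw [e.apply_symm_apply] at this
    exact this.mp hd_adj
  have hmem : ((e.symm d : s) : V) ∈ closedNbhd G u := mem_closedNbhd.mpr (Or.inr hW)
  rw [hsib] at hmem
  rcases mem_closedNbhd.mp hmem with h1 | h1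
  · have : e.symm d = v := Subtype.ext h1
    exact hd_ne (by rw [← this, e.apply_symm_apply])
  · have : (cycleGraph n).Adj (e v) d := by
      have h2 := e.map_adj_iff (v := v) (w := e.symm d)
      rw [e.apply_symm_apply] at h2
      exact h2.mpr h1
    exact cyc_F2 hn hadjc hd_adj (fun h => hd_ne h.symm) this

lemma mk_eq_of_sibling {u v : V} (h : Sibling G u v) :
    Quotient.mk (siblingSetoid G) u = Quotient.mk (siblingSetoid G) v := Quot.sound h

lemma rho_adj_mk {u v : V} :
    (rho G).Adj (Quotient.mk (siblingSetoid G) u) (Quotient.mk (siblingSetoid G) v) ↔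
      ¬ Sibling G u v ∧ G.Adj u v := by
  constructor
  · rintro ⟨hne, u', v', hu, hv, h⟩
    have su : Sibling G u' u := Quotient.exact hu
    have sv : Sibling G v' v := Quotient.exact hv
    have hns : ¬ Sibling G u v := fun hs => hne (Quotient.sound hs)
    have hv'u : v' ∈ closedNbhd G u := by
      rw [← su]; exact mem_closedNbhd.mpr (Or.inr h)
    rcases mem_closedNbhd.mp hv'u with h1 | h1
    · exact absurd (mk_eq_of_sibling (h1 ▸ sv : Sibling G u v)) hne
    · have huv' : u ∈ closedNbhd G v' := mem_closedNbhd.mpr (Or.inr h1.symm)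
      rw [sv] at huv'
      rcases mem_closedNbhd.mp huv' with h2 | h2
      · exact absurd (congrArg (Quotient.mk (siblingSetoid G)) h2) hne
      · exact ⟨hns, h2.symm⟩
  · rintro ⟨hns, h⟩
    exact ⟨fun he => hns (Quotient.exact he), u, v, rfl, rfl, h⟩

lemma hic_rho {n : ℕ} (hn : 4 ≤ n) (h : HasInducedCycle G n) :
    HasInducedCycle (rho G) n := by
  obtain ⟨s, ⟨e⟩⟩ := h
  have hinj : Set.InjOn (Quotient.mk (siblingSetoid G)) s := by
    intro u hu v hv huv
    by_contra hne
    exact not_sibling_of_cycle hn e ⟨u, hu⟩ ⟨v, hv⟩ hne (Quotient.exact huv)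
  have hadj : ∀ u : s, ∀ v : s,
      (rho G).Adj (Quotient.mk (siblingSetoid G) u) (Quotient.mk (siblingSetoid G) v) ↔
        G.Adj u v := by
    intro u v
    rw [rho_adj_mk]
    constructor
    · exact And.right
    · intro hadj
      exact ⟨not_sibling_of_cycle hn e u v (G.ne_of_adj hadj), hadj⟩
  exact ⟨Quotient.mk (siblingSetoid G) '' s,
    ⟨(induceIsoOfInjOn _ s hinj hadj).symm.trans e⟩⟩

lemma hic_of_rho {n : ℕ} (h : HasInducedCycle (rho G) n) : HasInducedCycle G n := by
  obtain ⟨s, ⟨e⟩⟩ := h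
  have hadj : ∀ A : s, ∀ B : s, G.Adj (Quotient.out (A : Quotient (siblingSetoid G)))
      (Quotient.out (B : Quotient (siblingSetoid G))) ↔ (rho G).Adj A B := by
    intro A B
    have hA : Quotient.mk (siblingSetoid G) (Quotient.out (A : Quotient (siblingSetoid G)))
        = (A : Quotient (siblingSetoid G)) := Quotient.out_eq _
    have hB : Quotient.mk (siblingSetoid G) (Quotient.out (B : Quotient (siblingSetoid G)))
        = (B : Quotient (siblingSetoid G)) := Quotient.out_eq _
    have key := @rho_adj_mk _ G (Quotient.out (A : Quotient (siblingSetoid G)))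
      (Quotient.out (B : Quotient (siblingSetoid G)))
    rw [hA, hB] at key
    rw [key]
    constructor
    · intro hG
      refine ⟨fun hs => ?_, hG⟩
      have hAB : Quotient.out (A : Quotient (siblingSetoid G))
          = Quotient.out (B : Quotient (siblingSetoid G)) := by
        have h3 : (A : Quotient (siblingSetoid G)) = B := by
          rw [← hA, ← hB]; exact mk_eq_of_sibling hs
        rw [h3]
      exact G.loopless.irrefl _ (hAB ▸ hG)
    · exact And.right
  exact ⟨Quotient.out '' s,
    ⟨(induceIsoOfInjOn Quotient.out s Quotient.out_injective.injOn hadj).symm.trans e⟩⟩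

lemma hic_lam {n : ℕ} (hn : 4 ≤ n) (h : HasInducedCycle G n) :
    HasInducedCycle (lam G) n := by
  obtain ⟨s, ⟨e⟩⟩ := h
  set T : Set V := {v : V | ¬ IsLeaf G v} with hT
  have hsub : s ⊆ T := fun v hv => not_isLeaf_of_cycle hn e ⟨v, hv⟩
  set s' : Set ↥T := Subtype.val ⁻¹' s with hs'
  have himg : Subtype.val '' s' = s := by
    ext v
    simp only [hs', Set.mem_image, Set.mem_preimage, Subtype.exists, exists_and_right,
      exists_eq_right]
    exact ⟨fun ⟨_, hv⟩ => hv, fun hv => ⟨hsub hv, hv⟩⟩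
  have e1 : SimpleGraph.induce s' (lam G) ≃g SimpleGraph.induce (Subtype.val '' s') G :=
    induceIsoOfInjOn Subtype.val s' Subtype.val_injective.injOn (fun u v => Iff.rfl)
  rw [himg] at e1
  exact ⟨s', ⟨e1.trans e⟩⟩

end GraphAux

lemma hic_redStep {n : ℕ} (hn : 4 ≤ n) (X : FinGraph.{u}) :
    HasInducedCycle X.G n ↔ HasInducedCycle (redStep X).G n := by
  constructor
  · intro h
    exact hic_rho hn (hic_lam hn h)
  · intro h
    exact hic_of_induce (hic_of_rho h)

lemma hic_iterate {n : ℕ} (hn : 4 ≤ n) (k : ℕ) (X : FinGraph.{u}) :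
    HasInducedCycle X.G n ↔ HasInducedCycle ((redStep^[k]) X).G n := by
  induction k with
  | zero => rfl
  | succ k ih =>
    rw [Function.iterate_succ_apply']
    exact ih.trans (hic_redStep hn _)

/-- For `n ≥ 4`, a connected graph `G` (other than `K2`) contains an induced `n`-cycle
if and only if the reduction of `G` contains an induced `n`-cycle. -/
theorem hasInducedCycle_iff_reduction {V : Type} [Fintype V] (G : SimpleGraph V)
    (hc : G.Connected) (hK2 : ¬ Nonempty (G ≃g K2)) (n : ℕ) (hn : 4 ≤ n) :
    HasInducedCycle G n ↔ HasInducedCycle (reduction ⟨V, G⟩).G n := by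
  exact hic_iterate hn (Nat.card V) ⟨V, G⟩
end

section
/- Let n ≥ 4, let G be a finite simple graph, let S be a sibling equivalence class of G, and let G' be the graph obtained from G by contracting S to a single vertex (the vertex set of G' is (V(G) \ S) together with one new vertex v', with v' adjacent to exactly the neighbors of S outside S, and all other adjacencies unchanged). If G contains an induced cycle on n vertices, then G' contains an induced cycle on n vertices. -/
open SimpleGraph

universe u

/-- The graph obtained from `G` by contracting the set `S` to a single new vertex
(`none`): its vertices are the vertices outside `S` together with one new vertex,
which is adjacent to exactly the neighbors of `S` outside `S`, all other adjacencies
being unchanged. -/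
def contractClass {V : Type u} (G : SimpleGraph V) (S : Set V) :
    SimpleGraph (Option ↥(Sᶜ)) :=
  SimpleGraph.fromRel (fun x y =>
    match x, y with
    | some u, some v => G.Adj (u : V) (v : V)
    | some u, none => ∃ w ∈ S, G.Adj (u : V) w
    | none, _ => False)

open Fin.CommRing in
lemma fin_val_nat (k m : ℕ) (hm : m < k + 2) : ((m : Fin (k+2))).val = m := by
  have h : ((m:ℕ) : Fin (k+2)).val = m % (k+2) := Fin.val_natCast m (k+2)
  rwa [Nat.mod_eq_of_lt hm] at h

open Fin.CommRing in
lemma cycle_helper {n : ℕ} (hn : 4 ≤ n) {a b : Fin n} (hab : (cycleGraph n).Adj a b) :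
    ∃ c : Fin n, (cycleGraph n).Adj a c ∧ c ≠ b ∧ ¬ (cycleGraph n).Adj b c := by
  obtain ⟨k, rfl⟩ : ∃ k, n = k + 2 := ⟨n - 2, by omega⟩
  rw [cycleGraph_adj] at hab
  have h1 : ((1 : Fin (k+2))).val = 1 := Fin.val_one _
  have h2 : ((2 : Fin (k+2))).val = 2 := by
    have := fin_val_nat k 2 (by omega); exact Nat.mod_eq_of_lt (show 2 < k + 2 by omega)
  have h3 : ((3 : Fin (k+2))).val = 3 := by
    have := fin_val_nat k 3 (by omega); exact Nat.mod_eq_of_lt (show 3 < k + 2 by omega)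
  have h1ne0 : (1 : Fin (k+2)) ≠ 0 := by intro h; rw [Fin.ext_iff, h1] at h; simp at h
  have h2ne0 : (2 : Fin (k+2)) ≠ 0 := by intro h; rw [Fin.ext_iff, h2] at h; simp at h
  have h3ne0 : (3 : Fin (k+2)) ≠ 0 := by intro h; rw [Fin.ext_iff, h3] at h; simp at h
  rcases hab with h | h
  · refine ⟨a + 1, ?_, ?_, ?_⟩
    · rw [cycleGraph_adj]; right; ring
    · intro hc; exact h2ne0 (by linear_combination hc - h)
    · rw [cycleGraph_adj]; push_neg
      refine ⟨fun hbc => ?_, fun hbc => h1ne0 (by linear_combination hbc - h)⟩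
      exact h3ne0 (by linear_combination -hbc - h)
  · refine ⟨a - 1, ?_, ?_, ?_⟩
    · rw [cycleGraph_adj]; left; ring
    · intro hc; exact h2ne0 (by linear_combination -h - hc)
    · rw [cycleGraph_adj]; push_neg
      refine ⟨fun hbc => h1ne0 (by linear_combination hbc - h), fun hbc => ?_⟩
      exact h3ne0 (by linear_combination -hbc - h)

/-- If `G` contains an induced `n`-cycle with `n ≥ 4`, then the graph obtained by
contracting a sibling equivalence class `S` to a single vertex contains an induced
`n`-cycle. -/
theorem hasInducedCycle_contract {V : Type} [Fintype V] (G : SimpleGraph V)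
    (n : ℕ) (hn : 4 ≤ n) (S : Set V) (hS : ∃ x : V, S = {v : V | Sibling G x v})
    (hcyc : HasInducedCycle G n) :
    HasInducedCycle (contractClass G S) n := by
  classical
  obtain ⟨x, hSx⟩ := hS
  obtain ⟨s, ⟨e⟩⟩ := hcyc
  have sibS : ∀ {u v : V}, u ∈ S → v ∈ S → Sibling G u v := by
    intro u v hu hv
    rw [hSx] at hu hv
    exact (Eq.symm hu).trans hv
  have sib_adj : ∀ {u v : V}, Sibling G u v → u ≠ v → G.Adj u v := by
    intro u v hs hne
    have h : u ∈ closedNbhd G v := hs ▸ Set.mem_insert u _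
    rcases h with h | h
    · exact absurd h hne
    · exact (G.adj_symm h)
  have uniq : ∀ {u v : V}, u ∈ s → v ∈ s → Sibling G u v → u = v := by
    intro u v hu hv hsib
    by_contra hne
    have hadj : G.Adj u v := sib_adj hsib hne
    have he : (cycleGraph n).Adj (e ⟨u, hu⟩) (e ⟨v, hv⟩) := by
      rw [e.map_rel_iff]; exact hadj
    obtain ⟨c, hac, hcb, hnbc⟩ := cycle_helper hn he
    have hadj_uw : G.Adj u ↑(e.symm c) := by
      have : (cycleGraph n).Adj (e ⟨u, hu⟩) (e (e.symm c)) := by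
        rwa [e.apply_symm_apply]
      exact e.map_rel_iff.mp this
    have hwv : (↑(e.symm c) : V) ≠ v := by
      intro h
      apply hcb
      have : e.symm c = ⟨v, hv⟩ := Subtype.ext h
      rw [← this, e.apply_symm_apply]
    have hnadj_vw : ¬ G.Adj v ↑(e.symm c) := by
      intro h
      apply hnbc
      have : (cycleGraph n).Adj (e ⟨v, hv⟩) (e (e.symm c)) := e.map_rel_iff.mpr h
      rwa [e.apply_symm_apply] at this
    have hmem : (↑(e.symm c) : V) ∈ closedNbhd G v := by
      rw [← hsib]
      exact Set.mem_insert_of_mem _ hadj_uw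
    rcases hmem with h | h
    · exact hwv h
    · exact hnadj_vw h
  set f : V → Option ↥(Sᶜ) := fun v => if h : v ∈ S then none else some ⟨v, h⟩ with hf
  have hinj : Set.InjOn f s := by
    intro u hu v hv huv
    by_cases hus : u ∈ S <;> by_cases hvs : v ∈ S <;> simp only [hf, hus, hvs,
      dif_pos, dif_neg, not_false_iff] at huv
    · exact uniq hu hv (sibS hus hvs)
    · exact absurd huv (by simp)
    · exact absurd huv (by simp)
    · exact congrArg Subtype.val (Option.some_injective _ huv)
  have hadj_iff : ∀ u v : V, u ∈ s → v ∈ s →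
      ((contractClass G S).Adj (f u) (f v) ↔ G.Adj u v) := by
    intro u v hu hv
    by_cases hus : u ∈ S <;> by_cases hvs : v ∈ S <;>
      simp only [hf, hus, hvs, dif_pos, dif_neg, not_false_iff, contractClass,
        SimpleGraph.fromRel_adj]
    · constructor
      · rintro ⟨h, -⟩; exact absurd rfl h
      · intro h; exact absurd (uniq hu hv (sibS hus hvs)) h.ne
    · constructor
      · rintro ⟨-, h | ⟨w, hw, hadj⟩⟩
        · exact h.elim
        · have : (v : V) ∈ closedNbhd G u := by
            rw [sibS hus hw]
            exact Set.mem_insert_of_mem _ hadj.symm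
          rcases this with h' | h'
          · exact absurd h'.symm (by rintro rfl; exact hvs hus)
          · exact h'
      · intro h
        exact ⟨by simp, Or.inr ⟨u, hus, h.symm⟩⟩
    · constructor
      · rintro ⟨-, ⟨w, hw, hadj⟩ | h⟩
        · have : (u : V) ∈ closedNbhd G v := by
            rw [sibS hvs hw]
            exact Set.mem_insert_of_mem _ hadj.symm
          rcases this with h' | h'
          · exact absurd h' (by rintro rfl; exact hus hvs)
          · exact h'.symm
        · exact h.elim
      · intro h
        exact ⟨by simp, Or.inl ⟨v, hvs, h⟩⟩
    · constructor
      · rintro ⟨hne, h | h⟩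
        · exact h
        · exact h.symm
      · intro h
        exact ⟨by simpa [Subtype.ext_iff] using h.ne, Or.inl h⟩
  have hiso : SimpleGraph.induce (f '' s) (contractClass G S) ≃g SimpleGraph.induce s G := by
    refine ⟨(Equiv.Set.imageOfInjOn f s hinj).symm, ?_⟩
    intro a b
    have ha : (a : Option ↥(Sᶜ)) = f ↑((Equiv.Set.imageOfInjOn f s hinj).symm a) := by
      conv_lhs => rw [← (Equiv.Set.imageOfInjOn f s hinj).apply_symm_apply a]
      rfl
    have hb : (b : Option ↥(Sᶜ)) = f ↑((Equiv.Set.imageOfInjOn f s hinj).symm b) := by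
      conv_lhs => rw [← (Equiv.Set.imageOfInjOn f s hinj).apply_symm_apply b]
      rfl
    simp only [SimpleGraph.induce, comap_adj, Function.Embedding.coe_subtype]
    rw [ha, hb]
    exact (hadj_iff _ _ ((Equiv.Set.imageOfInjOn f s hinj).symm a).2
      ((Equiv.Set.imageOfInjOn f s hinj).symm b).2).symm
  exact ⟨f '' s, ⟨hiso.trans e⟩⟩
end

section
/- For any finite simple graph G, the quotient graph ρ(G) is not isomorphic to K2. -/
open SimpleGraph

universe u

lemma sibling_eq_or_adj {V : Type u} (G : SimpleGraph V) {u v : V}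
    (h : Sibling G u v) : u = v ∨ G.Adj u v := by
  have hv : v ∈ closedNbhd G u := by
    rw [h]; exact Set.mem_insert _ _
  rcases hv with h' | h'
  · exact Or.inl h'.symm
  · exact Or.inr ((G.mem_neighborSet u v).mp h')

lemma adj_of_rho_adj {V : Type u} (G : SimpleGraph V) {u v : V}
    (h : (rho G).Adj (Quotient.mk (siblingSetoid G) u) (Quotient.mk (siblingSetoid G) v)) :
    G.Adj u v := by
  obtain ⟨hne, u', v', hu', hv', hadj⟩ := h
  have hsu : Sibling G u' u := Quotient.exact hu'
  have hsv : Sibling G v' v := Quotient.exact hv'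
  have h1 : v' ∈ closedNbhd G u := by
    rw [← hsu]; exact Set.mem_insert_of_mem _ ((G.mem_neighborSet u' v').mpr hadj)
  have hvu : v' ≠ u := by
    intro e; apply hne; rw [← hv', ← e]
  have h2 : G.Adj u v' := by
    rcases h1 with h' | h'
    · exact absurd h' hvu
    · exact (G.mem_neighborSet u v').mp h'
  have h3 : u ∈ closedNbhd G v := by
    rw [← hsv]; exact Set.mem_insert_of_mem _ ((G.mem_neighborSet v' u).mpr h2.symm)
  rcases h3 with h' | h'
  · exact absurd (congrArg (Quotient.mk (siblingSetoid G)) h') hne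
  · exact ((G.mem_neighborSet v u).mp h').symm

/-- The quotient of a graph by its sibling relation is never isomorphic to `K2`. -/
theorem rho_not_iso_K2 {V : Type} [Fintype V] (G : SimpleGraph V) :
    ¬ Nonempty (rho G ≃g K2) := by
  rintro ⟨e⟩
  set A := e.symm 0 with hA
  set B := e.symm 1 with hB
  have hne : A ≠ B := by
    intro h
    have := e.symm.injective h
    exact absurd this (by simp [K2, SimpleGraph.top_adj])
  have hAB : (rho G).Adj A B := by
    exact e.symm.map_adj_iff.mpr (by simp [K2, SimpleGraph.top_adj])
  have htwo : ∀ x : Fin 2, x = 0 ∨ x = 1 := by decide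
  have hmem : ∀ C : Quotient (siblingSetoid G), C = A ∨ C = B := by
    intro C
    have hC : C = e.symm (e C) := (e.symm_apply_apply C).symm
    rcases htwo (e C) with h | h
    · left; rw [hC, h]
    · right; rw [hC, h]
  -- every two distinct vertices of G are adjacent
  have hadj : ∀ x y : V, x ≠ y → G.Adj x y := by
    intro x y hxy
    by_cases hq : Quotient.mk (siblingSetoid G) x = Quotient.mk (siblingSetoid G) y
    · have hs : Sibling G x y := Quotient.exact hq
      rcases sibling_eq_or_adj G hs with h | h
      · exact absurd h hxy
      · exact h
    · apply adj_of_rho_adj G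
      rcases hmem (Quotient.mk (siblingSetoid G) x) with hx | hx <;>
        rcases hmem (Quotient.mk (siblingSetoid G) y) with hy | hy
      · exact absurd (hx.trans hy.symm) hq
      · rw [hx, hy]; exact hAB
      · rw [hx, hy]; exact hAB.symm
      · exact absurd (hx.trans hy.symm) hq
  -- hence all closed neighborhoods are univ, so all vertices are siblings
  have huniv : ∀ x : V, closedNbhd G x = Set.univ := by
    intro x
    ext z
    simp only [Set.mem_univ, iff_true, closedNbhd]
    by_cases h : z = x
    · exact Or.inl h
    · exact Or.inr ((G.mem_neighborSet x z).mpr (hadj x z (Ne.symm h)))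
  apply hne
  rw [← Quotient.out_eq A, ← Quotient.out_eq B]
  exact Quotient.sound (((huniv A.out).trans (huniv B.out).symm) : Sibling G A.out B.out)
end
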